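/- For every pair of nodes u, v in graphs G_a, G_b (possibly distinct) and every k ≥ 1: if the depth-k computation trees of u and v are equal, then the WL colors of u and v after k−1 iterations of the 1-WL color refinement are equal. -/

import Mathlib

open scoped BigOperators


noncomputable section

/-- Unnormalized optimal transport between equal-cardinality multisets (represented
as lists): the minimum over bijective matchings of the summed ground costs. -/
noncomputable def listOT {α : Type*} (d : α → α → ℝ) (X Y : List α) : ℝ :=
  sInf {c : ℝ | ∃ Y' : List α, Y.Perm Y' ∧ c = (List.zipWith d X Y').sum}

/-- Blank augmentation `ρ`: pad the smaller multiset with copies of the blank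
element `b` so that both multisets have equal cardinality. -/
def pad {α : Type*} (b : α) (X Y : List α) : List α × List α :=
  (X ++ List.replicate (Y.length - X.length) b,
   Y ++ List.replicate (X.length - Y.length) b)

/-- Blank-augmented unnormalized optimal transport `OT_d(ρ(X, Y))`. -/
noncomputable def otPad {α : Type*} (d : α → α → ℝ) (b : α) (X Y : List α) : ℝ :=
  listOT d (pad b X Y).1 (pad b X Y).2

/-- Rooted trees with node features in `ℝ^p`; children are recorded as a list
(representing the multiset of child subtrees). -/
inductive RTree (p : ℕ) : Type
  | node : EuclideanSpace ℝ (Fin p) → List (RTree p) → RTree p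

namespace RTree

variable {p : ℕ}

/-- The blank tree: a single node with zero feature vector and no children. -/
def blank : RTree p := node 0 []

mutual
  /-- Depth of a rooted tree (a single node has depth 1). -/
  def depth : RTree p → ℕ
    | node _ cs => 1 + depthList cs
  /-- Maximal depth of a list of trees. -/
  def depthList : List (RTree p) → ℕ
    | [] => 0
    | t :: ts => max (depth t) (depthList ts)
end

/-- Tree distance with recursion fuel: `tdAux w n` computes the hierarchical-OT
tree distance `TD_w` correctly whenever `n` is at least the maximal depth. -/
noncomputable def tdAux (w : ℕ → ℝ) : ℕ → RTree p → RTree p → ℝ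
  | 0, _, _ => 0
  | n + 1, node x cs, node y ds =>
      ‖x - y‖ +
        (if 1 < max (node x cs).depth (node y ds).depth then
          w (max (node x cs).depth (node y ds).depth) * otPad (tdAux w n) blank cs ds
        else 0)

/-- The tree distance `TD_w`: distance of root features, plus `w(L)` times the
blank-augmented unnormalized OT between the multisets of child subtrees (with
`TD_w` as the recursive ground cost), `L` being the maximum depth. -/
noncomputable def TD (w : ℕ → ℝ) (Ta Tb : RTree p) : ℝ :=
  tdAux w (max Ta.depth Tb.depth) Ta Tb

/-- Number of nodes at a level of the tree (level `0` is the root, so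
`Width_l(T) = widthAt T (l-1)` in 1-indexed level notation). -/
def widthAt : RTree p → ℕ → ℕ
  | _, 0 => 1
  | node _ cs, l + 1 => (cs.map (fun c => widthAt c l)).sum
termination_by t l => l

/-- Every node feature in the tree is nonzero. -/
inductive NoZero : RTree p → Prop
  | node {x : EuclideanSpace ℝ (Fin p)} {cs : List (RTree p)} :
      x ≠ 0 → (∀ t ∈ cs, NoZero t) → NoZero (RTree.node x cs)

/-- Equivalence of rooted labelled trees up to reordering of children (fuel
version). -/
def equivAux : ℕ → RTree p → RTree p → Prop
  | 0, _, _ => True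
  | n + 1, node x cs, node y ds =>
      x = y ∧ ∃ ds' : List (RTree p), ds.Perm ds' ∧ List.Forall₂ (equivAux n) cs ds'

/-- Two rooted labelled trees are isomorphic: equal roots and children match up
to a bijection level by level. -/
def Equiv' (Ta Tb : RTree p) : Prop := equivAux (max Ta.depth Tb.depth) Ta Tb

end RTree

/-- Depth-`(k+1)` computation tree of node `v`: `compTree G x 0 v` is the single
node `v` with its feature, and the level-`(k+1)` tree attaches the depth-`k`
computation trees of the neighbors of `v`. -/
noncomputable def compTree {V : Type*} [Fintype V] {p : ℕ} (G : SimpleGraph V)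
    [DecidableRel G.Adj] (x : V → EuclideanSpace ℝ (Fin p)) : ℕ → V → RTree p
  | 0, v => RTree.node (x v) []
  | k + 1, v => RTree.node (x v) (((G.neighborFinset v).val.toList).map (compTree G x k))

/-- Tree Mover's Distance `TMD_w^L`: blank-augmented unnormalized OT between the
multisets of depth-`L` computation trees of the two attributed graphs, with the
hierarchical tree distance `TD_w` as ground cost. -/
noncomputable def TMD {Va Vb : Type*} [Fintype Va] [Fintype Vb] {p : ℕ}
    (w : ℕ → ℝ) (L : ℕ)
    (Ga : SimpleGraph Va) [DecidableRel Ga.Adj] (xa : Va → EuclideanSpace ℝ (Fin p))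
    (Gb : SimpleGraph Vb) [DecidableRel Gb.Adj] (xb : Vb → EuclideanSpace ℝ (Fin p)) : ℝ :=
  otPad (RTree.TD w) RTree.blank
    ((Finset.univ.val.toList).map (compTree Ga xa (L - 1)))
    ((Finset.univ.val.toList).map (compTree Gb xb (L - 1)))


noncomputable section

/-- Canonical WL color space: `WLColor p k` is the type of colors after `k`
rounds of refinement (an injective hash is modelled by the identity on this
canonical color space). -/
def WLColor (p : ℕ) : ℕ → Type :=
  fun k => Nat.rec (EuclideanSpace ℝ (Fin p)) (fun _ C => C × Multiset C) k

/-- 1-WL color refinement: `wl G x 0 v = x v` and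
`wl G x (k+1) v = (wl G x k v, {{wl G x k u : u ∈ N(v)}})`. -/
noncomputable def wl {V : Type*} [Fintype V] {p : ℕ} (G : SimpleGraph V)
    [DecidableRel G.Adj] (x : V → EuclideanSpace ℝ (Fin p)) :
    (k : ℕ) → V → WLColor p k
  | 0, v => x v
  | k + 1, v => (wl G x k v, (G.neighborFinset v).val.map (wl G x k))

/-- GIN node embeddings. -/
noncomputable def ginEmb {V : Type*} [Fintype V] {d : ℕ} (G : SimpleGraph V)
    [DecidableRel G.Adj] (x : V → EuclideanSpace ℝ (Fin d))
    (φ : ℕ → EuclideanSpace ℝ (Fin d) → EuclideanSpace ℝ (Fin d)) (ε : ℝ) :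
    ℕ → V → EuclideanSpace ℝ (Fin d)
  | 0, v => x v
  | l + 1, v =>
      φ (l + 1) (ginEmb G x φ ε l v + ε • ∑ u ∈ G.neighborFinset v, ginEmb G x φ ε l u)

/-- GIN graph-level output with readout `ψ`. -/
noncomputable def gin {V : Type*} [Fintype V] {d : ℕ} (G : SimpleGraph V)
    [DecidableRel G.Adj] (x : V → EuclideanSpace ℝ (Fin d))
    (φ : ℕ → EuclideanSpace ℝ (Fin d) → EuclideanSpace ℝ (Fin d)) (ε : ℝ)
    (ψ : EuclideanSpace ℝ (Fin d) → ℝ) (L : ℕ) : ℝ :=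
  ψ (∑ v, ginEmb G x φ ε L v)


section Aux

open RTree List

lemma perm_map_exists {α β : Type*} (f : α → β) :
    ∀ {l₁ l₂ : List β}, l₁.Perm l₂ → ∀ l : List α, l₁ = l.map f →
      ∃ l', l.Perm l' ∧ l₂ = l'.map f := by
  intro l₁ l₂ h
  induction h with
  | nil =>
    intro l hl
    have : l = [] := by simpa using hl.symm
    subst this; exact ⟨[], .refl _, rfl⟩
  | cons a h ih =>
    intro l hl
    cases l with
    | nil => simp at hl
    | cons b t =>
      simp only [List.map_cons, List.cons.injEq] at hl
      obtain ⟨rfl, ht⟩ := hl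
      obtain ⟨t', hpt, rfl⟩ := ih t ht
      exact ⟨b :: t', hpt.cons b, rfl⟩
  | swap a b l'' =>
    intro l hl
    match l with
    | [] => simp at hl
    | [c] => simp at hl
    | c :: d :: t =>
      simp only [List.map_cons, List.cons.injEq] at hl
      obtain ⟨rfl, rfl, ht⟩ := hl
      exact ⟨d :: c :: t, .swap _ _ _, by simp [ht]⟩
  | trans h1 h2 ih1 ih2 =>
    intro l hl
    obtain ⟨l', hp, rfl⟩ := ih1 l hl
    obtain ⟨l'', hp2, rfl⟩ := ih2 l' rfl
    exact ⟨l'', hp.trans hp2, rfl⟩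

lemma forall₂_imp_mem {α β : Type*} {R S : α → β → Prop} :
    ∀ {l₁ : List α} {l₂ : List β}, List.Forall₂ R l₁ l₂ →
      (∀ a ∈ l₁, ∀ b ∈ l₂, R a b → S a b) → List.Forall₂ S l₁ l₂ := by
  intro l₁ l₂ h
  induction h with
  | nil => intro _; exact .nil
  | cons hr _ ih =>
    intro H
    exact .cons (H _ List.mem_cons_self _ List.mem_cons_self hr)
      (ih fun a ha b hb => H a (List.mem_cons_of_mem _ ha) b (List.mem_cons_of_mem _ hb))

variable {p : ℕ}

lemma RTree.one_le_depth (t : RTree p) : 1 ≤ t.depth := by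
  cases t with
  | node x cs => rw [RTree.depth]; omega

lemma RTree.depth_le_depthList : ∀ {ts : List (RTree p)} {t : RTree p}, t ∈ ts →
    t.depth ≤ RTree.depthList ts := by
  intro ts
  induction ts with
  | nil => intro t ht; simp at ht
  | cons a l ih =>
    intro t ht
    rw [RTree.depthList]
    rcases List.mem_cons.1 ht with rfl | h
    · exact le_max_left _ _
    · exact le_trans (ih h) (le_max_right _ _)

lemma RTree.depthList_le {ts : List (RTree p)} {n : ℕ} (h : ∀ t ∈ ts, t.depth ≤ n) :
    RTree.depthList ts ≤ n := by
  induction ts with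
  | nil => rw [RTree.depthList]; omega
  | cons a l ih =>
    rw [RTree.depthList]
    exact max_le (h a List.mem_cons_self) (ih fun t ht => h t (List.mem_cons_of_mem _ ht))

lemma equivAux_succ : ∀ (n : ℕ) (Ta Tb : RTree p), Ta.depth ≤ n → Tb.depth ≤ n →
    RTree.equivAux n Ta Tb → RTree.equivAux (n + 1) Ta Tb := by
  intro n
  induction n with
  | zero =>
    intro Ta Tb ha _ _
    exact absurd (le_trans Ta.one_le_depth ha) (by omega)
  | succ n ih =>
    rintro ⟨x, cs⟩ ⟨y, ds⟩ ha hb ⟨hxy, ds', hperm, hf⟩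
    refine ⟨hxy, ds', hperm, ?_⟩
    rw [RTree.depth] at ha hb
    have hcs : ∀ t ∈ cs, RTree.depth t ≤ n := fun t ht =>
      le_trans (RTree.depth_le_depthList ht) (by omega)
    have hds : ∀ t ∈ ds', RTree.depth t ≤ n := fun t ht =>
      le_trans (RTree.depth_le_depthList (hperm.mem_iff.2 ht))
        (by omega)
    exact forall₂_imp_mem hf fun a ha' b hb' hr => ih a b (hcs a ha') (hds b hb') hr

lemma equivAux_mono {n m : ℕ} {Ta Tb : RTree p} (ha : Ta.depth ≤ n) (hb : Tb.depth ≤ n)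
    (h : RTree.equivAux n Ta Tb) (hnm : n ≤ m) : RTree.equivAux m Ta Tb := by
  induction m with
  | zero =>
    have := Nat.le_zero.1 hnm; subst this; exact h
  | succ m ih =>
    rcases Nat.lt_or_ge n (m + 1) with hlt | hge
    · exact equivAux_succ m Ta Tb (le_trans ha (by omega)) (le_trans hb (by omega))
        (ih (by omega))
    · have : n = m + 1 := le_antisymm hnm hge
      subst this; exact h

lemma depth_compTree_le {V : Type*} [Fintype V] (G : SimpleGraph V) [DecidableRel G.Adj]
    (x : V → EuclideanSpace ℝ (Fin p)) : ∀ (k : ℕ) (v : V),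
    (compTree G x k v).depth ≤ k + 1 := by
  intro k
  induction k with
  | zero => intro v; rw [compTree, RTree.depth, RTree.depthList]
  | succ k ih =>
    intro v
    rw [compTree, RTree.depth]
    have : RTree.depthList (((G.neighborFinset v).val.toList).map (compTree G x k)) ≤ k + 1 := by
      apply RTree.depthList_le
      intro t ht
      obtain ⟨w, _, rfl⟩ := List.mem_map.1 ht
      exact ih w
    omega

variable {Va Vb : Type*} [Fintype Va] [Fintype Vb]
  (Ga : SimpleGraph Va) [DecidableRel Ga.Adj] (xa : Va → EuclideanSpace ℝ (Fin p))
  (Gb : SimpleGraph Vb) [DecidableRel Gb.Adj] (xb : Vb → EuclideanSpace ℝ (Fin p))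

lemma compTree_trunc : ∀ (m : ℕ) (u : Va) (v : Vb),
    RTree.equivAux (m + 2) (compTree Ga xa (m + 1) u) (compTree Gb xb (m + 1) v) →
    RTree.equivAux (m + 1) (compTree Ga xa m u) (compTree Gb xb m v) := by
  intro m
  induction m with
  | zero =>
    rintro u v ⟨hxy, _⟩
    exact ⟨hxy, [], .refl _, .nil⟩
  | succ m ih =>
    rintro u v ⟨hxy, ds', hperm, hf⟩
    obtain ⟨Lv', hpL, rfl⟩ := perm_map_exists (compTree Gb xb (m + 1)) hperm _ rfl
    refine ⟨hxy, Lv'.map (compTree Gb xb m), hpL.map _, ?_⟩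
    rw [List.forall₂_map_left_iff, List.forall₂_map_right_iff] at hf ⊢
    exact forall₂_imp_mem hf fun a _ b _ hr => ih a b hr

lemma wl_eq_of_equivAux : ∀ (m : ℕ) (u : Va) (v : Vb),
    RTree.equivAux (m + 1) (compTree Ga xa m u) (compTree Gb xb m v) →
    wl Ga xa m u = wl Gb xb m v := by
  intro m
  induction m with
  | zero =>
    rintro u v ⟨hxy, -⟩
    exact hxy
  | succ m ih =>
    rintro u v h
    obtain ⟨hxy, ds', hperm, hf⟩ := h
    obtain ⟨Lv', hpL, rfl⟩ := perm_map_exists (compTree Gb xb m) hperm _ rfl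
    rw [List.forall₂_map_left_iff, List.forall₂_map_right_iff] at hf
    have hwl : List.Forall₂ (fun a b => wl Ga xa m a = wl Gb xb m b)
        (Ga.neighborFinset u).val.toList Lv' :=
      forall₂_imp_mem hf fun a _ b _ hr => ih a b hr
    have hmaps : ((Ga.neighborFinset u).val.toList).map (wl Ga xa m)
        = Lv'.map (wl Gb xb m) := by
      rw [← List.forall₂_eq_eq_eq]
      rw [List.forall₂_map_left_iff, List.forall₂_map_right_iff]
      exact hwl
    have h1 : wl Ga xa m u = wl Gb xb m v := by
      refine ih u v (compTree_trunc Ga xa Gb xb m u v ⟨hxy, Lv'.map (compTree Gb xb m),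
        hpL.map _, ?_⟩)
      rw [List.forall₂_map_left_iff, List.forall₂_map_right_iff]
      exact hf
    rw [wl, wl, h1]
    congr 1
    calc (Ga.neighborFinset u).val.map (wl Ga xa m)
        = ((((Ga.neighborFinset u).val.toList).map (wl Ga xa m) : List _) : Multiset _) := by
          rw [← Multiset.map_coe, Multiset.coe_toList]
      _ = ((Lv'.map (wl Gb xb m) : List _) : Multiset _) := by rw [hmaps]
      _ = (((Gb.neighborFinset v).val.toList.map (wl Gb xb m) : List _) : Multiset _) := by
          exact Quot.sound ((hpL.map (wl Gb xb m)).symm)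
      _ = (Gb.neighborFinset v).val.map (wl Gb xb m) := by
          rw [← Multiset.map_coe, Multiset.coe_toList]

end Aux

/-- If the depth-`k` computation trees of `u` and `v` are equal (as labelled
rooted trees with multiset children), then their WL colors after `k - 1`
iterations of 1-WL color refinement agree. -/
theorem wl_eq_of_compTree_equiv {Va Vb : Type*} [Fintype Va] [Fintype Vb] {p : ℕ}
    (Ga : SimpleGraph Va) [DecidableRel Ga.Adj] (xa : Va → EuclideanSpace ℝ (Fin p))
    (Gb : SimpleGraph Vb) [DecidableRel Gb.Adj] (xb : Vb → EuclideanSpace ℝ (Fin p))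
    (k : ℕ) (hk : 1 ≤ k) (u : Va) (v : Vb)
    (h : RTree.Equiv' (compTree Ga xa (k - 1) u) (compTree Gb xb (k - 1) v)) :
    wl Ga xa (k - 1) u = wl Gb xb (k - 1) v := by
  set m := k - 1 with hm
  apply wl_eq_of_equivAux Ga xa Gb xb m u v
  have ha := depth_compTree_le Ga xa m u
  have hb := depth_compTree_le Gb xb m v
  exact equivAux_mono (le_max_left _ _) (le_max_right _ _) h
    (by simp only [max_le_iff]; omega)

end
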